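/- Let T(x) = x - 1/x and let x ∈ ℝ, r ∈ (0, 1/4). Then there exists a periodic point p of T in (x - r, x + r) with period at most ((-ln r)/ln 2 + 1)·(4/r²) + x². -/

import Mathlib

noncomputable section BoolePrivate

namespace BoolePrivate

/-- Boole's map. -/
def Tm (y : ℝ) : ℝ := y - 1 / y

/-- positive inverse branch -/
def ps (w : ℝ) : ℝ := (w + Real.sqrt (w ^ 2 + 4)) / 2

/-- negative inverse branch -/
def ph (w : ℝ) : ℝ := (w - Real.sqrt (w ^ 2 + 4)) / 2

lemma sq_sqrt4 (w : ℝ) : Real.sqrt (w ^ 2 + 4) ^ 2 = w ^ 2 + 4 :=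
  Real.sq_sqrt (by positivity)

lemma sqrt4_pos (w : ℝ) : 0 < Real.sqrt (w ^ 2 + 4) :=
  Real.sqrt_pos.2 (by positivity)

lemma lt_sqrt4 (w : ℝ) : w < Real.sqrt (w ^ 2 + 4) := by
  nlinarith [sq_sqrt4 w, sqrt4_pos w]

lemma neg_sqrt4_lt (w : ℝ) : -Real.sqrt (w ^ 2 + 4) < w := by
  nlinarith [sq_sqrt4 w, sqrt4_pos w]

lemma ps_pos (w : ℝ) : 0 < ps w := by
  have := neg_sqrt4_lt w
  unfold ps; linarith

lemma ph_neg (w : ℝ) : ph w < 0 := by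
  have := lt_sqrt4 w
  unfold ph; linarith

lemma ps_add_ph (w : ℝ) : ps w + ph w = w := by unfold ps ph; ring

lemma ps_mul_ph (w : ℝ) : ps w * ph w = -1 := by
  have h := sq_sqrt4 w
  unfold ps ph
  nlinarith [h]

lemma T_ps (w : ℝ) : Tm (ps w) = w := by
  have h1 := ps_mul_ph w
  have h2 := ps_add_ph w
  have h3 : ps w ≠ 0 := ne_of_gt (ps_pos w)
  unfold Tm
  field_simp
  linear_combination ps w * h2 - h1

lemma T_ph (w : ℝ) : Tm (ph w) = w := by
  have h1 := ps_mul_ph w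
  have h2 := ps_add_ph w
  have h3 : ph w ≠ 0 := ne_of_lt (ph_neg w)
  unfold Tm
  field_simp
  linear_combination ph w * h2 - h1

lemma tm_expand {a b : ℝ} (ha : a ≠ 0) (hb : b ≠ 0) :
    Tm b - Tm a = (b - a) * (1 + 1 / (a * b)) := by
  unfold Tm; field_simp; ring

lemma tm_lt_pos {a b : ℝ} (ha : 0 < a) (h : a < b) : Tm a < Tm b := by
  have hb : 0 < b := lt_trans ha h
  have := tm_expand (ne_of_gt ha) (ne_of_gt hb)
  have h1 : 0 < 1 + 1 / (a * b) := by positivity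
  nlinarith

lemma tm_le_pos {a b : ℝ} (ha : 0 < a) (h : a ≤ b) : Tm a ≤ Tm b := by
  rcases eq_or_lt_of_le h with rfl | h'
  · exact le_rfl
  · exact le_of_lt (tm_lt_pos ha h')

lemma tm_lt_neg {a b : ℝ} (hb : b < 0) (h : a < b) : Tm a < Tm b := by
  have ha : a < 0 := lt_trans h hb
  have := tm_expand (ne_of_lt ha) (ne_of_lt hb)
  have hab : 0 < a * b := mul_pos_of_neg_of_neg ha hb
  have h1 : 0 < 1 + 1 / (a * b) := by positivity
  nlinarith

lemma tm_le_neg {a b : ℝ} (hb : b < 0) (h : a ≤ b) : Tm a ≤ Tm b := by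
  rcases eq_or_lt_of_le h with rfl | h'
  · exact le_rfl
  · exact le_of_lt (tm_lt_neg hb h')

/-- expansion: images at least as long, positive side -/
lemma tm_expand_ge_pos {a b : ℝ} (ha : 0 < a) (h : a ≤ b) : b - a ≤ Tm b - Tm a := by
  have hb : 0 < b := lt_of_lt_of_le ha h
  have := tm_expand (ne_of_gt ha) (ne_of_gt hb)
  have h1 : 0 < 1 / (a * b) := by positivity
  nlinarith

lemma tm_expand_ge_neg {a b : ℝ} (hb : b < 0) (h : a ≤ b) : b - a ≤ Tm b - Tm a := by
  have ha : a < 0 := lt_of_le_of_lt h hb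
  have hab : 0 < a * b := mul_pos_of_neg_of_neg ha hb
  have := tm_expand (ne_of_lt ha) (ne_of_lt hb)
  have h1 : 0 < 1 / (a * b) := by positivity
  nlinarith

lemma ps_of_T {z : ℝ} (hz : 0 < z) : ps (Tm z) = z := by
  set w := Tm z with hw
  have hzne : z ≠ 0 := ne_of_gt hz
  have h0 : (z - ps w) * (z - ph w) = 0 := by
    have h1 : z ^ 2 - w * z - 1 = 0 := by
      rw [hw]; unfold Tm; field_simp; ring
    have h2 := ps_add_ph w
    have h3 := ps_mul_ph w
    nlinarith [h1, h2, h3]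
  rcases mul_eq_zero.1 h0 with h | h
  · linarith
  · exfalso; have := ph_neg w; linarith

lemma ph_of_T {z : ℝ} (hz : z < 0) : ph (Tm z) = z := by
  set w := Tm z with hw
  have hzne : z ≠ 0 := ne_of_lt hz
  have h0 : (z - ps w) * (z - ph w) = 0 := by
    have h1 : z ^ 2 - w * z - 1 = 0 := by
      rw [hw]; unfold Tm; field_simp; ring
    have h2 := ps_add_ph w
    have h3 := ps_mul_ph w
    nlinarith [h1, h2, h3]
  rcases mul_eq_zero.1 h0 with h | h
  · exfalso; have := ps_pos w; linarith
  · linarith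

lemma ps_mono : Monotone ps := by
  intro u v h
  by_contra hc
  push_neg at hc
  have := tm_lt_pos (ps_pos v) hc
  rw [T_ps, T_ps] at this
  linarith

lemma ph_mono : Monotone ph := by
  intro u v h
  by_contra hc
  push_neg at hc
  have := tm_lt_neg (ph_neg u) hc
  rw [T_ph, T_ph] at this
  linarith

lemma ps_lt_one {w : ℝ} (hw : w < 0) : ps w < 1 := by
  by_contra hc
  push_neg at hc
  have : Tm 1 ≤ Tm (ps w) := tm_le_pos one_pos hc
  rw [T_ps] at this
  have : Tm 1 = 0 := by unfold Tm; norm_num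
  linarith [tm_le_pos one_pos hc, T_ps w, this]

lemma neg_one_lt_ph {w : ℝ} (hw : 0 < w) : -1 < ph w := by
  by_contra hc
  push_neg at hc
  have h1 : Tm (ph w) ≤ Tm (-1) := tm_le_neg (by norm_num) hc
  rw [T_ph] at h1
  have : Tm (-1) = 0 := by unfold Tm; norm_num
  linarith

lemma tm_neg_apply (y : ℝ) : Tm (-y) = -Tm y := by
  unfold Tm
  rw [one_div_neg_eq_neg_one_div]
  ring

lemma tm_iter_neg (n : ℕ) (y : ℝ) : Tm^[n] (-y) = -(Tm^[n] y) := by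
  induction n generalizing y with
  | zero => simp
  | succ n ih =>
    rw [Function.iterate_succ_apply, Function.iterate_succ_apply, tm_neg_apply, ih]


/-- `Cov n a b c d`: there is a monotone inverse branch of `Tm^[n]` defined on
`[c,d]`, taking values in `[a,b]`, with orbit never hitting `0` before time `n`. -/
def Cov (n : ℕ) (a b c d : ℝ) : Prop :=
  ∃ g : ℝ → ℝ, MonotoneOn g (Set.Icc c d) ∧
    ∀ y ∈ Set.Icc c d, g y ∈ Set.Icc a b ∧ Tm^[n] (g y) = y ∧ ∀ i < n, Tm^[i] (g y) ≠ 0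

lemma Cov_rfl (a b : ℝ) (h : a ≤ b) : Cov 0 a b a b := by
  refine ⟨id, monotoneOn_id, ?_⟩
  intro y hy
  simp only [id]
  exact ⟨hy, rfl, by omega⟩

lemma Cov_sub {n : ℕ} {a b c d c' d' : ℝ} (h : Cov n a b c d)
    (h1 : c ≤ c') (h2 : d' ≤ d) : Cov n a b c' d' := by
  obtain ⟨g, hm, hg⟩ := h
  have hsub : Set.Icc c' d' ⊆ Set.Icc c d := Set.Icc_subset_Icc h1 h2
  exact ⟨g, hm.mono hsub, fun y hy => hg y (hsub hy)⟩

lemma Cov_trans {m n : ℕ} {a b c d e f : ℝ} (h1 : Cov m a b c d)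
    (h2 : Cov n c d e f) : Cov (m + n) a b e f := by
  obtain ⟨g1, hm1, hg1⟩ := h1
  obtain ⟨g2, hm2, hg2⟩ := h2
  refine ⟨g1 ∘ g2, ?_, ?_⟩
  · intro u hu v hv huv
    exact hm1 (hg2 u hu).1 (hg2 v hv).1 (hm2 hu hv huv)
  · intro y hy
    obtain ⟨hmem2, hit2, hnz2⟩ := hg2 y hy
    obtain ⟨hmem1, hit1, hnz1⟩ := hg1 (g2 y) hmem2
    refine ⟨hmem1, ?_, ?_⟩
    · have : m + n = n + m := Nat.add_comm m n
      rw [this, Function.iterate_add_apply]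
      simp only [Function.comp_apply]
      rw [hit1, hit2]
    · intro i hi
      by_cases him : i < m
      · exact hnz1 i him
      · push_neg at him
        obtain ⟨j, rfl⟩ := Nat.exists_eq_add_of_le him
        have hj : j < n := by omega
        have : Tm^[m + j] ((g1 ∘ g2) y) = Tm^[j] (g2 y) := by
          rw [Nat.add_comm m j, Function.iterate_add_apply]
          simp only [Function.comp_apply]
          rw [hit1]
        rw [this]
        exact hnz2 j hj

/-- basic step, positive branch, on a subinterval `[a',b'] ⊆ [a,b]` with `0 < a'`. -/
lemma Cov_step_pos {a b a' b' : ℝ} (ha : a ≤ a') (hb : b' ≤ b) (h0 : 0 < a')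
    (hab : a' ≤ b') : Cov 1 a b (Tm a') (Tm b') := by
  refine ⟨ps, fun u _ v _ huv => ps_mono huv, ?_⟩
  intro y hy
  have h1 : a' ≤ ps y := by
    have := ps_mono hy.1; rwa [ps_of_T h0] at this
  have h2 : ps y ≤ b' := by
    have := ps_mono hy.2; rwa [ps_of_T (lt_of_lt_of_le h0 hab)] at this
  refine ⟨⟨le_trans ha h1, le_trans h2 hb⟩, ?_, ?_⟩
  · rw [Function.iterate_one, T_ps]
  · intro i hi
    interval_cases i
    simp only [Function.iterate_zero, id]
    exact ne_of_gt (lt_of_lt_of_le h0 h1)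

lemma Cov_step_neg {a b a' b' : ℝ} (ha : a ≤ a') (hb : b' ≤ b) (h0 : b' < 0)
    (hab : a' ≤ b') : Cov 1 a b (Tm a') (Tm b') := by
  refine ⟨ph, fun u _ v _ huv => ph_mono huv, ?_⟩
  intro y hy
  have h1 : a' ≤ ph y := by
    have := ph_mono hy.1; rwa [ph_of_T (lt_of_le_of_lt hab h0)] at this
  have h2 : ph y ≤ b' := by
    have := ph_mono hy.2; rwa [ph_of_T h0] at this
  refine ⟨⟨le_trans ha h1, le_trans h2 hb⟩, ?_, ?_⟩
  · rw [Function.iterate_one, T_ph]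
  · intro i hi
    interval_cases i
    simp only [Function.iterate_zero, id]
    exact ne_of_lt (lt_of_le_of_lt h2 h0)

lemma Cov_neg_symm {n : ℕ} {a b c d : ℝ} (h : Cov n a b c d) :
    Cov n (-b) (-a) (-d) (-c) := by
  obtain ⟨g, hm, hg⟩ := h
  refine ⟨fun y => -g (-y), ?_, ?_⟩
  · intro u hu v hv huv
    simp only
    have hu' : -u ∈ Set.Icc c d := by
      simp only [Set.mem_Icc] at hu ⊢; constructor <;> linarith [hu.1, hu.2]
    have hv' : -v ∈ Set.Icc c d := by
      simp only [Set.mem_Icc] at hv ⊢; constructor <;> linarith [hv.1, hv.2]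
    have : g (-v) ≤ g (-u) := hm hv' hu' (by linarith)
    linarith
  · intro y hy
    have hy' : -y ∈ Set.Icc c d := by
      simp only [Set.mem_Icc] at hy ⊢; constructor <;> linarith [hy.1, hy.2]
    obtain ⟨hmem, hit, hnz⟩ := hg (-y) hy'
    refine ⟨?_, ?_, ?_⟩
    · simp only [Set.mem_Icc] at hmem ⊢; constructor <;> linarith [hmem.1, hmem.2]
    · rw [tm_iter_neg, hit]; ring
    · intro i hi
      rw [tm_iter_neg]
      simpa using hnz i hi
/-- Knaster–Tarski style fixed point for a monotone self-map of `[a,b]`. -/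
lemma monotone_fixed {a b : ℝ} (hab : a ≤ b) (g : ℝ → ℝ)
    (hm : MonotoneOn g (Set.Icc a b)) (hmaps : ∀ y ∈ Set.Icc a b, g y ∈ Set.Icc a b) :
    ∃ p ∈ Set.Icc a b, g p = p := by
  set S : Set ℝ := {y | y ∈ Set.Icc a b ∧ y ≤ g y} with hS
  have haS : a ∈ S := by
    refine ⟨⟨le_rfl, hab⟩, ?_⟩
    exact (hmaps a ⟨le_rfl, hab⟩).1
  have hne : S.Nonempty := ⟨a, haS⟩
  have hbdd : BddAbove S := ⟨b, fun y hy => hy.1.2⟩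
  set p := sSup S with hp
  have hpa : a ≤ p := le_csSup hbdd haS
  have hpb : p ≤ b := csSup_le hne (fun y hy => hy.1.2)
  have hpmem : p ∈ Set.Icc a b := ⟨hpa, hpb⟩
  have hple : p ≤ g p := by
    apply csSup_le hne
    intro y hy
    exact le_trans hy.2 (hm hy.1 hpmem (le_csSup hbdd hy))
  have hgpmem : g p ∈ Set.Icc a b := hmaps p hpmem
  have hgpS : g p ∈ S := ⟨hgpmem, hm hpmem hgpmem hple⟩
  have : g p ≤ p := le_csSup hbdd hgpS
  exact ⟨p, hpmem, le_antisymm this hple⟩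

lemma iter_ne_zero {p : ℝ} {N : ℕ} (hN : 0 < N) (hper : Tm^[N] p = p)
    (h : ∀ i < N, Tm^[i] p ≠ 0) : ∀ n, Tm^[n] p ≠ 0 := by
  intro n
  have hmul : ∀ k, Tm^[N * k] p = p := by
    intro k
    rw [Function.iterate_mul]
    exact Function.iterate_fixed hper k
  have heq : Tm^[n] p = Tm^[n % N] p := by
    conv_lhs => rw [← Nat.mod_add_div n N]
    rw [Function.iterate_add_apply, hmul]
  rw [heq]
  exact h _ (Nat.mod_lt _ hN)

/-- descent on the negative side: iterate until the right endpoint is in `[-1,0)`. -/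
lemma descNeg : ∀ n : ℕ, ∀ c d : ℝ, c ≤ d → d < 0 → d ^ 2 ≤ (n : ℝ) →
    ∃ (k : ℕ) (c' d' : ℝ), k ≤ n ∧ Cov k c d c' d' ∧ -1 ≤ d' ∧ d' < 0 ∧
      d - c ≤ d' - c' := by
  intro n
  induction n with
  | zero =>
    intro c d hcd hd hsq
    exfalso
    have h0 : 0 < d ^ 2 := by nlinarith [mul_pos_of_neg_of_neg hd hd]
    simp at hsq; nlinarith
  | succ n ih =>
    intro c d hcd hd hsq
    by_cases hd1 : -1 ≤ d
    · exact ⟨0, c, d, Nat.zero_le _, Cov_rfl c d hcd, hd1, hd, le_rfl⟩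
    · push_neg at hd1
      have hstep : Cov 1 c d (Tm c) (Tm d) := Cov_step_neg le_rfl le_rfl hd hcd
      have hTd_neg : Tm d < 0 := by
        unfold Tm
        have h1 : -1 / d < 1 := by
          rw [div_lt_iff_of_neg hd]; linarith
        have : 1 / d = -(-1 / d) := by ring
        nlinarith [h1]
      have hTd_sq : (Tm d) ^ 2 ≤ d ^ 2 - 1 := by
        have hdne : d ≠ 0 := ne_of_lt hd
        have h2 : (1:ℝ) ≤ d ^ 2 := by nlinarith
        have : (Tm d) ^ 2 = d ^ 2 - 2 + (1 / d) ^ 2 := by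
          unfold Tm; field_simp; ring
        have h3 : (1 / d) ^ 2 ≤ 1 := by
          rw [div_pow, one_pow]
          rw [div_le_one (by positivity)]
          exact h2
        linarith
      have hsq' : (Tm d) ^ 2 ≤ (n : ℝ) := by
        push_cast at hsq ⊢; linarith
      have hle : Tm c ≤ Tm d := tm_le_neg hd hcd
      obtain ⟨k, c', d', hk, hcov, h1', h2', h3'⟩ := ih (Tm c) (Tm d) hle hTd_neg hsq'
      refine ⟨k + 1, c', d', by omega, ?_, h1', h2', ?_⟩
      · have := Cov_trans hstep hcov
        rwa [Nat.add_comm] at this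
      · have := tm_expand_ge_neg hd hcd
        linarith

/-- descent on the positive side: iterate until the left endpoint is in `(0, 9/8)`. -/
lemma descPos : ∀ n : ℕ, ∀ c d : ℝ, c ≤ d → 0 < c → c ^ 2 ≤ (n : ℝ) →
    ∃ (k : ℕ) (c' d' : ℝ), k ≤ n ∧ Cov k c d c' d' ∧ 0 < c' ∧ c' < 9/8 ∧
      d - c ≤ d' - c' := by
  intro n
  induction n with
  | zero =>
    intro c d hcd hc hsq
    exfalso
    have : 0 < c ^ 2 := by positivity
    simp at hsq; nlinarith
  | succ n ih =>
    intro c d hcd hc hsq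
    by_cases hc1 : c < 9/8
    · exact ⟨0, c, d, Nat.zero_le _, Cov_rfl c d hcd, hc, hc1, le_rfl⟩
    · push_neg at hc1
      have hstep : Cov 1 c d (Tm c) (Tm d) := Cov_step_pos le_rfl le_rfl hc hcd
      have hTc_pos : 0 < Tm c := by
        unfold Tm
        have h1 : 1 / c ≤ 8/9 := by
          rw [div_le_iff₀ hc]; linarith
        linarith
      have hTc_sq : (Tm c) ^ 2 ≤ c ^ 2 - 1 := by
        have hcne : c ≠ 0 := ne_of_gt hc
        have h2 : (1:ℝ) ≤ c ^ 2 := by nlinarith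
        have : (Tm c) ^ 2 = c ^ 2 - 2 + (1 / c) ^ 2 := by
          unfold Tm; field_simp; ring
        have h3 : (1 / c) ^ 2 ≤ 1 := by
          rw [div_pow, one_pow, div_le_one (by positivity)]
          exact h2
        linarith
      have hsq' : (Tm c) ^ 2 ≤ (n : ℝ) := by
        push_cast at hsq ⊢; linarith
      have hle : Tm c ≤ Tm d := tm_le_pos hc hcd
      obtain ⟨k, c', d', hk, hcov, h1', h2', h3'⟩ := ih (Tm c) (Tm d) hle hTc_pos hsq'
      refine ⟨k + 1, c', d', by omega, ?_, h1', h2', ?_⟩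
      · have := Cov_trans hstep hcov
        rwa [Nat.add_comm] at this
      · have := tm_expand_ge_pos hc hcd
        linarith
/-- the dive: from `[q/4, q]` near zero we reach a "success interval". -/
lemma dive (q : ℝ) (h0 : 0 < q) (h1 : q ≤ 1/4) :
    ∃ (k : ℕ) (c d : ℝ), (k : ℝ) ≤ 1 / q ^ 2 + 3 ∧ Cov k (q/4) q c d ∧
      c ≤ -1 ∧ 0 ≤ d := by
  have hq4 : 0 < q / 4 := by linarith
  have hstep : Cov 1 (q/4) q (Tm (q/4)) (Tm q) :=
    Cov_step_pos le_rfl le_rfl hq4 (by linarith)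
  have hqne : q ≠ 0 := ne_of_gt h0
  have hTq_neg : Tm q < 0 := by
    unfold Tm
    have : 4 ≤ 1 / q := by rw [le_div_iff₀ h0]; linarith
    linarith
  have hTq_sq : (Tm q) ^ 2 ≤ (1 / q) ^ 2 := by
    have : (Tm q) ^ 2 = (1/q) ^ 2 - 2 + q ^ 2 := by
      unfold Tm; field_simp; ring
    nlinarith
  have hlen : 12 ≤ Tm q - Tm (q/4) := by
    have he := tm_expand (ne_of_gt hq4) hqne
    have h2 : (q/4) * q ≤ q ^ 2 := by nlinarith
    have h3 : 1 / ((q/4) * q) = 4 / q ^ 2 := by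
      field_simp
    have h4 : (12:ℝ) ≤ (3 * q / 4) * (4 / q ^ 2) := by
      have : (3 * q / 4) * (4 / q ^ 2) = 3 / q := by field_simp
      rw [this]
      rw [le_div_iff₀ h0]; linarith
    have h5 : (q - q/4) * (1 + 1/((q/4)*q)) = (3 * q/4) * (1 + 4 / q ^ 2) := by
      rw [h3]; ring
    nlinarith [he, h4]
  set nd := Nat.ceil ((1/q)^2) with hnd
  have hnd1 : (Tm q) ^ 2 ≤ (nd : ℝ) := le_trans hTq_sq (Nat.le_ceil _)
  have hnd2 : (nd : ℝ) ≤ 1 / q ^ 2 + 1 := by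
    have := Nat.ceil_lt_add_one (show (0:ℝ) ≤ (1/q)^2 by positivity)
    have heq : ((1:ℝ)/q)^2 = 1/q^2 := by field_simp
    rw [hnd]; push_cast; nlinarith [this]
  obtain ⟨k2, c', d', hk2, hcov2, hd1', hd2', hlen'⟩ :=
    descNeg nd (Tm (q/4)) (Tm q) (by linarith) hTq_neg hnd1
  have hc' : c' ≤ -2 := by linarith
  have hc'neg : c' < 0 := by linarith
  have hstep3 : Cov 1 c' d' (Tm c') (Tm d') := Cov_step_neg le_rfl le_rfl hd2' (by linarith)
  have hTc' : Tm c' ≤ -1 := by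
    unfold Tm
    have hc'0 : c' < 0 := by linarith
    have hkey : -(1/2) ≤ 1 / c' := by
      rw [le_div_iff_of_neg hc'0]
      nlinarith
    linarith
  have hTd' : 0 ≤ Tm d' := by
    unfold Tm
    have : 1 / d' ≤ -1 := by
      rw [div_le_iff_of_neg hd2']; nlinarith
    linarith
  refine ⟨1 + k2 + 1, Tm c', Tm d', ?_, ?_, hTc', hTd'⟩
  · push_cast
    have : (k2 : ℝ) ≤ (nd : ℝ) := by exact_mod_cast hk2
    linarith
  · exact Cov_trans (Cov_trans hstep hcov2) hstep3

/-- From any "success interval" we can close up onto an arbitrary interval in 2 steps. -/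
lemma succ_chain {c d u v : ℝ}
    (h : (c ≤ -1 ∧ 0 ≤ d) ∨ (c ≤ 0 ∧ 1 ≤ d)) (huv : u ≤ v) : Cov 2 c d u v := by
  rcases h with ⟨h1, h2⟩ | ⟨h1, h2⟩
  · -- negative branch then positive branch
    set i1 := ph (ps u) with hi1
    set i2 := ph (ps v) with hi2
    have hpu : 0 < ps u := ps_pos u
    have hpv : 0 < ps v := ps_pos v
    have hi1gt : -1 < i1 := neg_one_lt_ph hpu
    have hi2lt : i2 < 0 := ph_neg _
    have hmono : i1 ≤ i2 := ph_mono (ps_mono huv)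
    have hcov1 : Cov 1 c d (Tm i1) (Tm i2) :=
      Cov_step_neg (by linarith) (by linarith) hi2lt hmono
    rw [hi1, hi2, T_ph, T_ph] at hcov1
    have hcov2 : Cov 1 (ps u) (ps v) (Tm (ps u)) (Tm (ps v)) :=
      Cov_step_pos le_rfl le_rfl hpu (ps_mono huv)
    rw [T_ps, T_ps] at hcov2
    exact Cov_trans hcov1 hcov2
  · -- positive branch then negative branch
    set j1 := ps (ph u) with hj1
    set j2 := ps (ph v) with hj2
    have hphu : ph u < 0 := ph_neg u
    have hphv : ph v < 0 := ph_neg v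
    have hj1pos : 0 < j1 := ps_pos _
    have hj2lt : j2 < 1 := ps_lt_one hphv
    have hmono : j1 ≤ j2 := ps_mono (ph_mono huv)
    have hcov1 : Cov 1 c d (Tm j1) (Tm j2) :=
      Cov_step_pos (by linarith) (by linarith) hj1pos hmono
    rw [hj1, hj2, T_ps, T_ps] at hcov1
    have hcov2 : Cov 1 (ph u) (ph v) (Tm (ph u)) (Tm (ph v)) :=
      Cov_step_neg le_rfl le_rfl hphv (ph_mono huv)
    rw [T_ph, T_ph] at hcov2
    exact Cov_trans hcov1 hcov2
/-- potential function controlling the number of steps of the main engine -/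
def Phi (l : ℝ) : ℝ := 25 + 6 * Real.logb 2 (9 / l) + 4 / l ^ 2

lemma Phi_anti {l1 l2 : ℝ} (h1 : 0 < l1) (h : l1 ≤ l2) : Phi l2 ≤ Phi l1 := by
  unfold Phi
  have h2 : 0 < l2 := lt_of_lt_of_le h1 h
  have hlog : Real.logb 2 (9 / l2) ≤ Real.logb 2 (9 / l1) := by
    apply Real.logb_le_logb_of_le (by norm_num : (1:ℝ) < 2) (by positivity)
    gcongr
  have hquad : 4 / l2 ^ 2 ≤ 4 / l1 ^ 2 := by
    gcongr
  linarith

lemma Phi_lb {l : ℝ} (h1 : 0 < l) (h2 : l ≤ 9) : 25 ≤ Phi l := by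
  unfold Phi
  have hlog : 0 ≤ Real.logb 2 (9 / l) := by
    apply Real.logb_nonneg (by norm_num)
    rw [le_div_iff₀ h1]; linarith
  have : 0 < 4 / l ^ 2 := by positivity
  linarith

lemma logb_sub {l1 l2 : ℝ} (h1 : 0 < l1) (h2 : 0 < l2) :
    Real.logb 2 (9 / l1) - Real.logb 2 (9 / l2) = Real.logb 2 (l2 / l1) := by
  rw [Real.logb_div (by norm_num) (ne_of_gt h1), Real.logb_div (by norm_num) (ne_of_gt h2),
    Real.logb_div (ne_of_gt h2) (ne_of_gt h1)]
  ring

lemma logb_139 : (1:ℝ)/2 ≤ Real.logb 2 (13/9) := by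
  rw [Real.logb, le_div_iff₀ (Real.log_pos (by norm_num))]
  have h1 : Real.log 2 ≤ Real.log ((13/9)^(2:ℕ)) := by
    apply Real.log_le_log (by norm_num)
    norm_num
  rw [Real.log_pow] at h1
  push_cast at h1
  linarith

/-- Step drop of the potential under expansion factor `13/9`. -/
lemma Phi_shift {l l' : ℝ} (h1 : 0 < l) (h2 : (13/9) * l ≤ l') : Phi l' ≤ Phi l - 3 := by
  have h3 : Phi l' ≤ Phi ((13/9) * l) := Phi_anti (by linarith) h2
  have h4 : Phi ((13/9)*l) ≤ Phi l - 3 := by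
    unfold Phi
    have hlog : Real.logb 2 (9 / l) - Real.logb 2 (9 / ((13/9)*l)) = Real.logb 2 (13/9) := by
      rw [logb_sub h1 (by linarith)]
      congr 1
      field_simp
    have hquad : 4 / ((13/9)*l) ^ 2 ≤ 4 / l ^ 2 := by
      gcongr
      nlinarith
    have := logb_139
    linarith
  linarith

/-- Drop of the potential under doubling. -/
lemma Phi_double {l l' : ℝ} (h1 : 0 < l) (h2 : 2 * l ≤ l') :
    Phi l' ≤ Phi l - 6 - 3 / l ^ 2 := by
  have h3 : Phi l' ≤ Phi (2 * l) := Phi_anti (by linarith) h2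
  have h4 : Phi (2*l) ≤ Phi l - 6 - 3 / l ^ 2 := by
    unfold Phi
    have hlog : Real.logb 2 (9 / l) - Real.logb 2 (9 / (2*l)) = Real.logb 2 2 := by
      rw [logb_sub h1 (by linarith)]
      congr 1
      field_simp
    have h2log : Real.logb 2 2 = 1 := Real.logb_self_eq_one (by norm_num)
    have hquad : 4 / (2*l) ^ 2 = 1 / l ^ 2 := by
      field_simp; ring
    rw [hquad]
    have : (4:ℝ) / l ^ 2 - 1 / l ^2 = 3 / l ^2 := by ring
    linarith
  linarith
lemma Phi_lb' {l : ℝ} (h1 : 0 < l) (h2 : l ≤ 9) : 25 + 4 / l ^ 2 ≤ Phi l := by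
  unfold Phi
  have hlog : 0 ≤ Real.logb 2 (9 / l) := by
    apply Real.logb_nonneg (by norm_num)
    rw [le_div_iff₀ h1]; linarith
  linarith

lemma tm_le_neg_one {c : ℝ} (h : c ≤ -2) : Tm c ≤ -1 := by
  have hc0 : c < 0 := by linarith
  unfold Tm
  have hkey : -(1/2) ≤ 1 / c := by
    rw [le_div_iff_of_neg hc0]
    nlinarith
  linarith

lemma tm_nonneg_of_unit {d : ℝ} (h1 : -1 ≤ d) (h2 : d < 0) : 0 ≤ Tm d := by
  unfold Tm
  have : 1 / d ≤ -1 := by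
    rw [div_le_iff_of_neg h2]; nlinarith
  linarith

set_option maxHeartbeats 3000000 in
/-- The main engine: from a moderate positive interval we eventually reach a
success interval, with step count controlled by the potential. -/
lemma engine : ∀ n : ℕ, ∀ A B : ℝ, 0 < A → A < 9/8 → A < B → B < 2 →
    Phi (B - A) ≤ (n : ℝ) →
    ∃ (k : ℕ) (c d : ℝ), (k : ℝ) ≤ Phi (B - A) ∧ Cov k A B c d ∧
      ((c ≤ -1 ∧ 0 ≤ d) ∨ (c ≤ 0 ∧ 1 ≤ d)) := by
  intro n
  induction n with
  | zero =>
    intro A B hA hA98 hAB hB2 hfuel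
    exfalso
    have hl : 0 < B - A := by linarith
    have := Phi_lb hl (by linarith)
    simp at hfuel
    linarith
  | succ n ih =>
    intro A B hA hA98 hAB hB2 hfuel
    have hB : 0 < B := lt_trans hA hAB
    have hl : 0 < B - A := by linarith
    have hl9 : B - A ≤ 9 := by linarith
    have hPhi25 : 25 ≤ Phi (B - A) := Phi_lb hl hl9
    have hPhiq : 25 + 4 / (B - A) ^ 2 ≤ Phi (B - A) := Phi_lb' hl hl9
    obtain ⟨A', hA'def⟩ : ∃ t, t = Tm A := ⟨_, rfl⟩
    obtain ⟨B', hB'def⟩ : ∃ t, t = Tm B := ⟨_, rfl⟩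
    have hstep : Cov 1 A B A' B' := by
      rw [hA'def, hB'def]; exact Cov_step_pos le_rfl le_rfl hA (le_of_lt hAB)
    have hAB' : A' < B' := by
      rw [hA'def, hB'def]; exact tm_lt_pos hA hAB
    have he := tm_expand (ne_of_gt hA) (ne_of_gt hB)
    have hab94 : A * B < 9/4 := by nlinarith
    have habpos : 0 < A * B := mul_pos hA hB
    have hfac : (13/9) * (B - A) ≤ B' - A' := by
      have h1 : (4:ℝ)/9 ≤ 1 / (A * B) := by
        rw [le_div_iff₀ habpos]; nlinarith
      calc (13/9) * (B - A) = (B - A) * (1 + 4/9) := by ring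
        _ ≤ (B - A) * (1 + 1/(A*B)) := by nlinarith
        _ = B' - A' := by rw [hA'def, hB'def]; exact he.symm
    have hl' : 0 < B' - A' := by nlinarith
    by_cases hA'pos : 0 < A'
    · -- p1 : stay positive, recurse
      have hA'lt : A' < 9/8 := by
        have h1 : Tm A < Tm (9/8) := tm_lt_pos hA hA98
        have h2 : Tm (9/8) = 17/72 := by unfold Tm; norm_num
        rw [← hA'def] at h1; rw [h2] at h1; linarith
      have hB'lt : B' < 2 := by
        have h1 : Tm B < Tm 2 := tm_lt_pos hB hB2
        have h2 : Tm 2 = 3/2 := by unfold Tm; norm_num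
        rw [← hB'def] at h1; rw [h2] at h1; linarith
      have hdrop : Phi (B' - A') ≤ Phi (B - A) - 3 := Phi_shift hl hfac
      have hfuel' : Phi (B' - A') ≤ (n : ℝ) := by
        push_cast at hfuel; linarith
      obtain ⟨k', c, d, hk', hcov', hdisj⟩ := ih A' B' hA'pos hA'lt hAB' hB'lt hfuel'
      refine ⟨1 + k', c, d, ?_, Cov_trans hstep hcov', hdisj⟩
      push_cast; linarith
    · push_neg at hA'pos
      by_cases hB'1 : 1 ≤ B'
      · -- p2 : direct success
        exact ⟨1, A', B', by push_cast; linarith, hstep, Or.inr ⟨hA'pos, hB'1⟩⟩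
      · push_neg at hB'1
        by_cases hB'0 : 0 ≤ B'
        · -- straddle : dive one way or the other
          by_cases hside : -A' ≤ B'
          · -- dive positive
            have hB'pos : 0 < B' := by
              rcases lt_or_eq_of_le hB'0 with h | h
              · exact h
              · exfalso; rw [← h] at hAB' hside; linarith
            obtain ⟨q, hqdef⟩ : ∃ t, t = min B' (1/4) := ⟨_, rfl⟩
            have hq0 : 0 < q := by rw [hqdef]; exact lt_min hB'pos (by norm_num)
            have hq14 : q ≤ 1/4 := by rw [hqdef]; exact min_le_right _ _
            obtain ⟨kd, c, d, hkd, hcovd, hc1, hd0⟩ := dive q hq0 hq14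
            have hsub : Cov 1 A B (q/4) q :=
              Cov_sub hstep (by linarith) (by rw [hqdef]; exact min_le_left _ _)
            have hq_lb : 1 / q ^ 2 ≤ 16 + 2 / (B - A) ^ 2 := by
              rcases min_cases B' (1/4) with ⟨hqe, hle⟩ | ⟨hqe, hle⟩
              · -- q = B'
                have h1 : (13/18) * (B - A) ≤ B' := by linarith
                have h2 : 1 / q ^ 2 ≤ 1 / ((13/18) * (B - A)) ^ 2 := by
                  have hc0 : (0:ℝ) < (13/18) * (B - A) := by positivity
                  have hsq : ((13/18) * (B - A))^2 ≤ q^2 := by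
                    rw [hqdef, hqe]; nlinarith
                  exact one_div_le_one_div_of_le (by positivity) hsq
                have h3 : 1 / ((13/18) * (B - A)) ^ 2 ≤ 2 / (B - A) ^ 2 := by
                  rw [div_le_div_iff₀ (by positivity) (by positivity)]
                  nlinarith [sq_nonneg (B - A)]
                linarith
              · -- q = 1/4
                have : 1 / q ^ 2 = 16 := by rw [hqdef, hqe]; norm_num
                have h4 : 0 ≤ 2 / (B - A)^2 := by positivity
                linarith
            refine ⟨1 + kd, c, d, ?_, Cov_trans hsub hcovd, Or.inl ⟨hc1, hd0⟩⟩
            have hmono : (2:ℝ)/(B-A)^2 ≤ 4/(B-A)^2 :=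
              (div_le_div_iff_of_pos_right (by positivity)).mpr (by norm_num)
            push_cast
            linarith
          · -- dive negative (mirror)
            push_neg at hside
            have hA'neg : A' < 0 := by linarith
            obtain ⟨q, hqdef⟩ : ∃ t, t = min (-A') (1/4) := ⟨_, rfl⟩
            have hq0 : 0 < q := by rw [hqdef]; exact lt_min (by linarith : (0:ℝ) < -A') (by norm_num)
            have hq14 : q ≤ 1/4 := by rw [hqdef]; exact min_le_right _ _
            obtain ⟨kd, c, d, hkd, hcovd, hc1, hd0⟩ := dive q hq0 hq14
            have hcovd' : Cov kd (-q) (-(q/4)) (-d) (-c) := by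
              have := Cov_neg_symm hcovd
              simpa using this
            have hsub : Cov 1 A B (-q) (-(q/4)) := by
              apply Cov_sub hstep
              · have h9 : q ≤ -A' := by rw [hqdef]; exact min_le_left _ _
                linarith
              · linarith
            have hq_lb : 1 / q ^ 2 ≤ 16 + 2 / (B - A) ^ 2 := by
              rcases min_cases (-A') (1/4) with ⟨hqe, hle⟩ | ⟨hqe, hle⟩
              · have h1 : (13/18) * (B - A) ≤ -A' := by linarith
                have h2 : 1 / q ^ 2 ≤ 1 / ((13/18) * (B - A)) ^ 2 := by
                  have hc0 : (0:ℝ) < (13/18) * (B - A) := by positivity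
                  have hsq : ((13/18) * (B - A))^2 ≤ q^2 := by
                    rw [hqdef, hqe]; nlinarith
                  exact one_div_le_one_div_of_le (by positivity) hsq
                have h3 : 1 / ((13/18) * (B - A)) ^ 2 ≤ 2 / (B - A) ^ 2 := by
                  rw [div_le_div_iff₀ (by positivity) (by positivity)]
                  nlinarith [sq_nonneg (B - A)]
                linarith
              · have : 1 / q ^ 2 = 16 := by rw [hqdef, hqe]; norm_num
                have h4 : 0 ≤ 2 / (B - A)^2 := by positivity
                linarith
            refine ⟨1 + kd, -d, -c, ?_, Cov_trans hsub hcovd', Or.inr ⟨by linarith, by linarith⟩⟩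
            have hmono : (2:ℝ)/(B-A)^2 ≤ 4/(B-A)^2 :=
              (div_le_div_iff_of_pos_right (by positivity)).mpr (by norm_num)
            push_cast
            linarith
        · -- all-negative image
          push_neg at hB'0
          by_cases hB'98 : B' ≤ -9/8
          · -- deep negative : descent
            have hB1 : B < 1 := by
              by_contra hc
              push_neg at hc
              have h1 : Tm 1 ≤ Tm B := tm_le_pos one_pos hc
              have h2 : Tm 1 = 0 := by unfold Tm; norm_num
              rw [← hB'def] at h1; rw [h2] at h1; linarith
            have hfac2 : 2 * (B - A) ≤ B' - A' := by
              have h1 : (1:ℝ) ≤ 1 / (A * B) := by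
                rw [le_div_iff₀ habpos]; nlinarith
              calc 2 * (B - A) = (B - A) * (1 + 1) := by ring
                _ ≤ (B - A) * (1 + 1/(A*B)) := by nlinarith
                _ = B' - A' := by rw [hA'def, hB'def]; exact he.symm
            have hlB : B - A < B := by linarith
            have hcert : B' ^ 2 ≤ (1/(B - A)) ^ 2 := by
              have h1 : B' ^ 2 ≤ (1/B)^2 := by
                have hx : B' ^ 2 = (1/B)^2 - 2 + B^2 := by
                  rw [hB'def]; unfold Tm; field_simp; ring
                nlinarith
              have h2 : (1/B)^2 ≤ (1/(B-A))^2 := by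
                have h2a : (1:ℝ)/B ≤ 1/(B-A) := one_div_le_one_div_of_le hl (le_of_lt hlB)
                have h2b : (0:ℝ) ≤ 1/B := by positivity
                nlinarith
              linarith
            obtain ⟨nd, hnddef⟩ : ∃ t, t = Nat.ceil ((1/(B - A))^2) := ⟨_, rfl⟩
            have hnd1 : B' ^ 2 ≤ (nd : ℝ) := by rw [hnddef]; exact le_trans hcert (Nat.le_ceil _)
            have hnd2 : (nd : ℝ) ≤ 1/(B - A)^2 + 1 := by
              have h5 := Nat.ceil_lt_add_one (show (0:ℝ) ≤ (1/(B-A))^2 by positivity)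
              have heq : ((1:ℝ)/(B-A))^2 = 1/(B-A)^2 := by field_simp
              rw [hnddef]; push_cast; nlinarith
            obtain ⟨k2, c', d', hk2, hcov2, hd1', hd2', hlen'⟩ :=
              descNeg nd A' B' (le_of_lt hAB') hB'0 hnd1
            have hk2r : (k2 : ℝ) ≤ 1/(B-A)^2 + 1 := by
              have : (k2 : ℝ) ≤ (nd : ℝ) := by exact_mod_cast hk2
              linarith
            have hc'd' : c' < d' := by nlinarith
            by_cases hc2 : c' ≤ -2
            · -- terminal
              have hstep3 : Cov 1 c' d' (Tm c') (Tm d') :=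
                Cov_step_neg le_rfl le_rfl hd2' (le_of_lt hc'd')
              refine ⟨1 + k2 + 1, Tm c', Tm d', ?_, ?_, Or.inl ⟨tm_le_neg_one hc2, tm_nonneg_of_unit hd1' hd2'⟩⟩
              · have hmono : (1:ℝ)/(B-A)^2 ≤ 4/(B-A)^2 :=
                  (div_le_div_iff_of_pos_right (by positivity)).mpr (by norm_num)
                push_cast; linarith
              · exact Cov_trans (Cov_trans hstep hcov2) hstep3
            · -- recurse on the mirrored interval
              push_neg at hc2
              have hdrop : Phi (d' - c') ≤ Phi (B - A) - 6 - 3 / (B - A)^2 :=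
                Phi_double hl (by linarith)
              have hfuel' : Phi ((-c') - (-d')) ≤ (n : ℝ) := by
                have : (-c') - (-d') = d' - c' := by ring
                rw [this]
                push_cast at hfuel
                have hq3 : 0 ≤ 3 / (B-A)^2 := by positivity
                linarith
              obtain ⟨k3, c3, d3, hk3, hcov3, hdisj3⟩ :=
                ih (-d') (-c') (by linarith) (by linarith) (by linarith) (by linarith) hfuel'
              have hcov3' : Cov k3 c' d' (-d3) (-c3) := by
                have := Cov_neg_symm hcov3
                simpa using this
              have hdisj' : ((-d3) ≤ -1 ∧ 0 ≤ (-c3)) ∨ ((-d3) ≤ 0 ∧ 1 ≤ (-c3)) := by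
                rcases hdisj3 with ⟨h1, h2⟩ | ⟨h1, h2⟩
                · right; constructor <;> linarith
                · left; constructor <;> linarith
              refine ⟨1 + k2 + k3, -d3, -c3, ?_, ?_, ?_⟩
              · have hk3r : (k3 : ℝ) ≤ Phi (d' - c') := by
                  have heq2 : (-c') - (-d') = d' - c' := by ring
                  rwa [heq2] at hk3
                have hmono : (1:ℝ)/(B-A)^2 ≤ 3/(B-A)^2 :=
                  (div_le_div_iff_of_pos_right (by positivity)).mpr (by norm_num)
                push_cast
                linarith
              · exact Cov_trans (Cov_trans hstep hcov2) hcov3'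
              · exact hdisj'
          · -- moderate negative : recurse mirrored
            push_neg at hB'98
            by_cases hA2 : -2 < A'
            · have hdrop : Phi (B' - A') ≤ Phi (B - A) - 3 := Phi_shift hl hfac
              have hfuel' : Phi ((-A') - (-B')) ≤ (n : ℝ) := by
                have heq2 : (-A') - (-B') = B' - A' := by ring
                rw [heq2]
                push_cast at hfuel
                linarith
              obtain ⟨k', c3, d3, hk', hcov3, hdisj3⟩ :=
                ih (-B') (-A') (by linarith) (by linarith) (by linarith) (by linarith) hfuel'
              have hcov3' : Cov k' A' B' (-d3) (-c3) := by
                have := Cov_neg_symm hcov3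
                simpa using this
              have hdisj' : ((-d3) ≤ -1 ∧ 0 ≤ (-c3)) ∨ ((-d3) ≤ 0 ∧ 1 ≤ (-c3)) := by
                rcases hdisj3 with ⟨h1, h2⟩ | ⟨h1, h2⟩
                · right; constructor <;> linarith
                · left; constructor <;> linarith
              refine ⟨1 + k', -d3, -c3, ?_, Cov_trans hstep hcov3', hdisj'⟩
              have hk'r : (k' : ℝ) ≤ Phi (B' - A') := by
                have heq2 : (-A') - (-B') = B' - A' := by ring
                rwa [heq2] at hk'
              push_cast
              linarith
            · -- terminal inline : A' ≤ -2
              push_neg at hA2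
              by_cases hB1 : -1 ≤ B'
              · have hstep2 : Cov 1 A' B' (Tm A') (Tm B') :=
                  Cov_step_neg le_rfl le_rfl hB'0 (le_of_lt hAB')
                refine ⟨1 + 1, Tm A', Tm B', by push_cast; linarith,
                  Cov_trans hstep hstep2,
                  Or.inl ⟨tm_le_neg_one hA2, tm_nonneg_of_unit hB1 hB'0⟩⟩
              · push_neg at hB1
                have hstep2 : Cov 1 A' B' (Tm A') (Tm B') :=
                  Cov_step_neg le_rfl le_rfl hB'0 (le_of_lt hAB')
                have hA2le : Tm A' ≤ -3/2 := by
                  have h1 : Tm A' ≤ Tm (-2) := tm_le_neg (by norm_num) hA2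
                  have h2 : Tm (-2) = -3/2 := by unfold Tm; norm_num
                  linarith [h1, h2.le]
                have hB2neg : Tm B' < 0 := by
                  have h1 : Tm B' < Tm (-1) := tm_lt_neg (by norm_num) hB1
                  have h2 : Tm (-1) = 0 := by unfold Tm; norm_num
                  linarith [h1]
                have hB2gt : -17/72 ≤ Tm B' := by
                  have h1 : Tm (-9/8) ≤ Tm B' := tm_le_neg hB'0 (by linarith)
                  have h2 : Tm (-9/8) = -17/72 := by unfold Tm; norm_num
                  linarith
                have hstep3 : Cov 1 (Tm A') (Tm B') (Tm (Tm A')) (Tm (Tm B')) :=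
                  Cov_step_neg le_rfl le_rfl hB2neg (by linarith)
                have hfin1 : Tm (Tm A') ≤ 0 := by
                  have h1 : Tm (Tm A') ≤ Tm (-3/2) := tm_le_neg (by norm_num) hA2le
                  have h2 : Tm (-3/2) = -5/6 := by unfold Tm; norm_num
                  linarith
                have hfin2 : 1 ≤ Tm (Tm B') := by
                  have h1 : Tm (-17/72) ≤ Tm (Tm B') := tm_le_neg hB2neg hB2gt
                  have h2 : Tm (-17/72) = 4895/1224 := by unfold Tm; norm_num
                  rw [h2] at h1
                  linarith
                refine ⟨1 + 1 + 1, Tm (Tm A'), Tm (Tm B'), by push_cast; linarith,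
                  Cov_trans (Cov_trans hstep hstep2) hstep3, Or.inr ⟨hfin1, hfin2⟩⟩
lemma cov_periodic {N : ℕ} {a b : ℝ} (hab : a ≤ b) (hN : 0 < N) (h : Cov N a b a b) :
    ∃ p ∈ Set.Icc a b, Tm^[N] p = p ∧ ∀ n, Tm^[n] p ≠ 0 := by
  obtain ⟨g, hm, hg⟩ := h
  obtain ⟨p, hp, hfix⟩ := monotone_fixed hab g hm (fun y hy => (hg y hy).1)
  have hit : Tm^[N] p = p := by
    have h2 := (hg p hp).2.1
    rwa [hfix] at h2
  have hnz : ∀ i < N, Tm^[i] p ≠ 0 := by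
    intro i hi
    have h2 := (hg p hp).2.2 i hi
    rwa [hfix] at h2
  exact ⟨p, hp, hit, iter_ne_zero hN hit hnz⟩

lemma budget (x r : ℝ) (hr0 : 0 < r) (hr4 : r < 1/4) :
    x ^ 2 + Phi ((3/4) * r) + 5 ≤ (-Real.log r / Real.log 2 + 1) * (4 / r ^ 2) + x ^ 2 := by
  have hlog2 : 0 < Real.log 2 := Real.log_pos (by norm_num)
  set L := -Real.log r / Real.log 2 with hLdef
  have hL2 : 2 ≤ L := by
    have h1 : Real.log r ≤ Real.log (1/4) := Real.log_le_log hr0 (by linarith)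
    have h2 : Real.log (1/4) = -(2 * Real.log 2) := by
      rw [show (1:ℝ)/4 = ((2:ℝ)^(2:ℕ))⁻¹ from by norm_num, Real.log_inv, Real.log_pow]
      push_cast; ring
    rw [hLdef, le_div_iff₀ hlog2]
    linarith
  have hphi : Phi ((3/4)*r) = 25 + 6 * Real.logb 2 (12 / r) + (64/9) / r^2 := by
    unfold Phi
    have h1 : 9 / ((3/4)*r) = 12 / r := by
      field_simp; ring
    have h2 : 4 / ((3/4)*r)^2 = (64/9) / r^2 := by
      field_simp; ring
    rw [h1, h2]
  have hlogb : Real.logb 2 (12 / r) ≤ 18/5 + L := by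
    rw [Real.logb, Real.log_div (by norm_num) (ne_of_gt hr0)]
    have h12 : Real.log 12 ≤ (18/5) * Real.log 2 := by
      have ha : Real.log ((12:ℝ)^(5:ℕ)) ≤ Real.log ((2:ℝ)^(18:ℕ)) := by
        apply Real.log_le_log (by positivity)
        norm_num
      rw [Real.log_pow, Real.log_pow] at ha
      push_cast at ha
      linarith
    rw [hLdef, div_le_iff₀ hlog2]
    have : (18/5 + -Real.log r / Real.log 2) * Real.log 2
        = (18/5) * Real.log 2 - Real.log r := by
      field_simp
      ring
    rw [this]
    linarith
  have h16 : 16 ≤ 1 / r^2 := by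
    rw [le_div_iff₀ (by positivity)]
    nlinarith
  have ht4 : 4 / r^2 = 4 * (1/r^2) := by ring
  have ht649 : (64/9) / r^2 = (64/9) * (1/r^2) := by ring
  have hLpos : 0 ≤ 4*L - 28/9 := by linarith
  have hkey : (4*L - 28/9) * 16 ≤ (4*L - 28/9) * (1/r^2) :=
    mul_le_mul_of_nonneg_left h16 hLpos
  rw [hphi]
  have hfin : 25 + 6 * Real.logb 2 (12/r) + (64/9)/r^2 + 5 ≤ (L + 1) * (4/r^2) := by
    have h1 : 6 * Real.logb 2 (12/r) ≤ 6 * (18/5 + L) := by linarith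
    have h2 : (L+1) * (4/r^2) = (4*L + 4) * (1/r^2) := by rw [ht4]; ring
    rw [h2, ht649]
    nlinarith [hkey, hL2]
  linarith

lemma main_pos (x r : ℝ) (hx : 0 ≤ x) (hr0 : 0 < r) (hr4 : r < 1/4) :
    ∃ (p : ℝ) (N : ℕ), p ∈ Set.Ioo (x - r) (x + r) ∧ 1 ≤ N ∧
      (∀ n : ℕ, Tm^[n] p ≠ 0) ∧ Tm^[N] p = p ∧
      (N : ℝ) ≤ (-Real.log r / Real.log 2 + 1) * (4 / r ^ 2) + x ^ 2 := by
  obtain ⟨a0, ha0def⟩ : ∃ t, t = max x r - (7/8)*r := ⟨_, rfl⟩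
  obtain ⟨b0, hb0def⟩ : ∃ t, t = a0 + (3/4)*r := ⟨_, rfl⟩
  have hmaxr : r ≤ max x r := le_max_right _ _
  have hmaxx : x ≤ max x r := le_max_left _ _
  have hmaxle : max x r ≤ x + r := max_le (by linarith) (by linarith)
  have ha0pos : r/8 ≤ a0 := by rw [ha0def]; linarith
  have ha0gt : x - r < a0 := by rw [ha0def]; linarith
  have hb0lt : b0 < x + r := by rw [hb0def, ha0def]; linarith
  have hab : a0 < b0 := by rw [hb0def]; linarith
  have hlen : b0 - a0 = (3/4)*r := by rw [hb0def]; ring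
  have hl34 : 0 < (3/4)*r := by linarith
  -- produce a closed covering loop `Cov N a0 b0 a0 b0` with a good bound on N
  suffices hsuff : ∃ N : ℕ, 0 < N ∧ Cov N a0 b0 a0 b0 ∧
      (N : ℝ) ≤ x^2 + Phi ((3/4)*r) + 5 by
    obtain ⟨N, hN0, hcov, hNb⟩ := hsuff
    obtain ⟨p, hp, hper, hnz⟩ := cov_periodic (le_of_lt hab) hN0 hcov
    refine ⟨p, N, ⟨by linarith [hp.1], by linarith [hp.2]⟩, hN0, hnz, hper, ?_⟩
    linarith [budget x r hr0 hr4]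
  by_cases ha98 : a0 < 9/8
  · -- directly run the engine
    have hb02 : b0 < 2 := by rw [hb0def]; linarith
    have ha0p : 0 < a0 := by linarith
    obtain ⟨k, c, d, hk, hcov, hdisj⟩ :=
      engine (Nat.ceil (Phi (b0 - a0))) a0 b0 ha0p ha98 hab hb02 (Nat.le_ceil _)
    have hclose : Cov 2 c d a0 b0 := succ_chain hdisj (le_of_lt hab)
    refine ⟨k + 2, by omega, Cov_trans hcov hclose, ?_⟩
    have hPhieq : Phi (b0 - a0) = Phi ((3/4)*r) := by rw [hlen]
    rw [hPhieq] at hk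
    push_cast
    nlinarith [sq_nonneg x]
  · -- first descend
    push_neg at ha98
    have ha0p : 0 < a0 := by linarith
    have hxr : r ≤ x := by
      by_contra hc
      push_neg at hc
      have : max x r = r := max_eq_right (le_of_lt hc)
      rw [this] at ha0def
      have : a0 = r/8 := by rw [ha0def]; ring
      rw [this] at ha98
      linarith
    have ha0x : a0 ≤ x := by
      have : max x r = x := max_eq_left hxr
      rw [ha0def, this]; linarith
    have ha0sq : a0^2 ≤ x^2 := by nlinarith
    obtain ⟨k1, c', d', hk1, hcov1, hc'pos, hc'98, hlen1⟩ :=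
      descPos (Nat.ceil (a0^2)) a0 b0 (le_of_lt hab) ha0p (Nat.le_ceil _)
    have hk1r : (k1 : ℝ) ≤ x^2 + 1 := by
      have h1 : (k1 : ℝ) ≤ (Nat.ceil (a0^2) : ℝ) := by exact_mod_cast hk1
      have h2 := Nat.ceil_lt_add_one (show (0:ℝ) ≤ a0^2 by positivity)
      linarith
    have hlc' : (3/4)*r ≤ d' - c' := by rw [← hlen]; linarith
    have hc'd' : c' < d' := by linarith
    by_cases hd2 : d' < 2
    · obtain ⟨k2, c, d, hk2, hcov2, hdisj⟩ :=
        engine (Nat.ceil (Phi (d' - c'))) c' d' hc'pos hc'98 hc'd' hd2 (Nat.le_ceil _)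
      have hclose : Cov 2 c d a0 b0 := succ_chain hdisj (le_of_lt hab)
      refine ⟨k1 + (k2 + 2), by omega, Cov_trans hcov1 (Cov_trans hcov2 hclose), ?_⟩
      have hmon : Phi (d' - c') ≤ Phi ((3/4)*r) := Phi_anti hl34 hlc'
      push_cast
      linarith
    · push_neg at hd2
      by_cases hc1 : c' ≤ 1
      · have hstep : Cov 1 c' d' (Tm c') (Tm d') :=
          Cov_step_pos le_rfl le_rfl hc'pos (le_of_lt hc'd')
        have hTc : Tm c' ≤ 0 := by
          have h1 : Tm c' ≤ Tm 1 := tm_le_pos hc'pos hc1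
          have h2 : Tm 1 = 0 := by unfold Tm; norm_num
          linarith
        have hTd : 1 ≤ Tm d' := by
          have h1 : Tm 2 ≤ Tm d' := tm_le_pos (by norm_num) hd2
          have h2 : Tm 2 = 3/2 := by unfold Tm; norm_num
          linarith
        have hclose : Cov 2 (Tm c') (Tm d') a0 b0 :=
          succ_chain (Or.inr ⟨hTc, hTd⟩) (le_of_lt hab)
        refine ⟨k1 + (1 + 2), by omega, Cov_trans hcov1 (Cov_trans hstep hclose), ?_⟩
        have hphi25 : 25 ≤ Phi ((3/4)*r) := Phi_lb hl34 (by linarith)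
        push_cast
        linarith
      · push_neg at hc1
        have hstep : Cov 1 c' d' (Tm c') (Tm d') :=
          Cov_step_pos le_rfl le_rfl hc'pos (le_of_lt hc'd')
        have hA2pos : 0 < Tm c' := by
          have h1 : Tm 1 < Tm c' := tm_lt_pos one_pos hc1
          have h2 : Tm 1 = 0 := by unfold Tm; norm_num
          linarith
        have hA2le : Tm c' ≤ 17/72 := by
          have h1 : Tm c' ≤ Tm (9/8) := tm_le_pos hc'pos (le_of_lt hc'98)
          have h2 : Tm (9/8) = 17/72 := by unfold Tm; norm_num
          linarith
        have hB2ge : 3/2 ≤ Tm d' := by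
          have h1 : Tm 2 ≤ Tm d' := tm_le_pos (by norm_num) hd2
          have h2 : Tm 2 = 3/2 := by unfold Tm; norm_num
          linarith
        have hstep2 : Cov 1 (Tm c') (Tm d') (Tm (Tm c')) (Tm (Tm d')) :=
          Cov_step_pos le_rfl le_rfl hA2pos (by linarith)
        have hfin1 : Tm (Tm c') ≤ -1 := by
          have h1 : Tm (Tm c') ≤ Tm (17/72) := tm_le_pos hA2pos hA2le
          have h2 : Tm (17/72) = -4895/1224 := by unfold Tm; norm_num
          rw [h2] at h1
          linarith
        have hfin2 : 0 ≤ Tm (Tm d') := by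
          have h1 : Tm (3/2) ≤ Tm (Tm d') := tm_le_pos (by norm_num) hB2ge
          have h2 : Tm (3/2) = 5/6 := by unfold Tm; norm_num
          linarith
        have hclose : Cov 2 (Tm (Tm c')) (Tm (Tm d')) a0 b0 :=
          succ_chain (Or.inl ⟨hfin1, hfin2⟩) (le_of_lt hab)
        refine ⟨k1 + (1 + (1 + 2)), by omega,
          Cov_trans hcov1 (Cov_trans hstep (Cov_trans hstep2 hclose)), ?_⟩
        have hphi25 : 25 ≤ Phi ((3/4)*r) := Phi_lb hl34 (by linarith)
        push_cast
        linarith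
end BoolePrivate

end BoolePrivate

/-- Periodic points for Boole's map: for every `x ∈ ℝ` and `r ∈ (0, 1/4)` there
is a periodic point `p ∈ (x-r, x+r)` of `T(y) = y - 1/y` (with well-defined
orbit, never hitting 0) whose period is at most
`((-ln r)/ln 2 + 1)·(4/r²) + x²`. -/
theorem boole_periodic_points (x : ℝ) (r : ℝ) (hr : r ∈ Set.Ioo (0 : ℝ) (1 / 4)) :
    ∃ (p : ℝ) (N : ℕ), p ∈ Set.Ioo (x - r) (x + r) ∧ 1 ≤ N ∧
      (∀ n : ℕ, (fun y : ℝ => y - 1 / y)^[n] p ≠ 0) ∧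
      (fun y : ℝ => y - 1 / y)^[N] p = p ∧
      (N : ℝ) ≤ (-Real.log r / Real.log 2 + 1) * (4 / r ^ 2) + x ^ 2 := by
  obtain ⟨hr0, hr4⟩ := hr
  have hTm : (fun y : ℝ => y - 1 / y) = BoolePrivate.Tm := rfl
  rcases le_or_gt 0 x with hx | hx
  · obtain ⟨p, N, hmem, hN, hnz, hper, hbd⟩ := BoolePrivate.main_pos x r hx hr0 hr4
    refine ⟨p, N, hmem, hN, ?_, ?_, hbd⟩
    · rw [hTm]; exact hnz
    · rw [hTm]; exact hper
  · obtain ⟨p, N, hmem, hN, hnz, hper, hbd⟩ :=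
      BoolePrivate.main_pos (-x) r (by linarith) hr0 hr4
    obtain ⟨hm1, hm2⟩ := hmem
    refine ⟨-p, N, ⟨by linarith, by linarith⟩, hN, ?_, ?_, ?_⟩
    · intro n
      rw [hTm, BoolePrivate.tm_iter_neg]
      exact neg_ne_zero.2 (hnz n)
    · rw [hTm, BoolePrivate.tm_iter_neg, hper]
    · have hxx : (-x)^2 = x^2 := by ring
      rw [hxx] at hbd
      exact hbd
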